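/- Every ring automorphism σ of the matrix ring M_n(D) over a skew field D decomposes as σ = Int(C) ∘ M_n(γ), where γ is a ring automorphism of D, M_n(γ) is the entrywise application of γ, and Int(C) is conjugation by some invertible matrix C ∈ M_n(D). -/

import Mathlib

open Matrix MulOpposite

namespace MatrixRingAutAux

variable {D : Type*} [DivisionRing D] {n : ℕ}

/-- `mulVec` as a `Dᵐᵒᵖ`-linear map (right `D`-linear). -/
def Lop (M : Matrix (Fin n) (Fin n) D) : (Fin n → D) →ₗ[Dᵐᵒᵖ] (Fin n → D) where
  toFun x := M *ᵥ x
  map_add' x y := Matrix.mulVec_add M x y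
  map_smul' c x := by
    ext i
    simp only [Matrix.mulVec, dotProduct, RingHom.id_apply, Pi.smul_apply,
      MulOpposite.smul_eq_mul_unop, Finset.sum_mul, mul_assoc]

@[simp] lemma Lop_apply (M : Matrix (Fin n) (Fin n) D) (x : Fin n → D) : Lop M x = M *ᵥ x := rfl

lemma mulVec_mulRight (M : Matrix (Fin n) (Fin n) D) (w : Fin n → D) (c : D) :
    M *ᵥ (fun i => w i * c) = fun i => (M *ᵥ w) i * c := by
  ext i
  simp only [Matrix.mulVec, dotProduct, Finset.sum_mul, mul_assoc]

lemma corner (hn : 0 < n) (N : Matrix (Fin n) (Fin n) D) :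
    haveI : NeZero n := ⟨hn.ne'⟩
    Matrix.single (0 : Fin n) 0 (1 : D) * N * Matrix.single 0 0 1
      = Matrix.single 0 0 (N 0 0) := by
  haveI : NeZero n := ⟨hn.ne'⟩
  ext a b
  by_cases hb : b = 0
  · subst hb
    by_cases ha : a = 0
    · subst ha
      simp
    · rw [Matrix.mul_single_apply_same, Matrix.single_mul_apply_of_ne _ _ _ _ _ ha,
        zero_mul]
      exact (Matrix.single_apply_of_ne _ _ _ _ _ (by tauto)).symm
  · rw [Matrix.mul_single_apply_of_ne _ _ _ _ _ hb]
    exact (Matrix.single_apply_of_ne _ _ _ _ _ (by tauto)).symm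

lemma sum_diag_one : (∑ i : Fin n, Matrix.single i i (1 : D)) = 1 := by
  ext a b
  simp only [Finset.sum_apply, Matrix.one_apply, Matrix.single, Matrix.of_apply,
    Matrix.sum_apply]
  rw [Finset.sum_eq_single a]
  · simp [eq_comm]
  · intro i _ hia
    simp [Ne.symm hia, hia]
  · simp

lemma sum_mulVec {ι : Type*} (s : Finset ι) (M : ι → Matrix (Fin n) (Fin n) D)
    (x : Fin n → D) : (∑ i ∈ s, M i) *ᵥ x = ∑ i ∈ s, M i *ᵥ x := by
  ext j
  simp only [Matrix.mulVec, dotProduct, Matrix.sum_apply, Finset.sum_apply, Finset.sum_mul]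
  rw [Finset.sum_comm]

lemma mulVec_sum {ι : Type*} (s : Finset ι) (M : Matrix (Fin n) (Fin n) D)
    (g : ι → (Fin n → D)) : M *ᵥ (∑ i ∈ s, g i) = ∑ i ∈ s, M *ᵥ g i := by
  ext j
  simp only [Matrix.mulVec, dotProduct, Finset.sum_apply, Finset.mul_sum]
  rw [Finset.sum_comm]

end MatrixRingAutAux

set_option maxHeartbeats 1600000 in
open MatrixRingAutAux in
/-- Every ring automorphism `σ` of `Mₙ(D)` over a skew field `D` decomposes as
`σ = Int(C) ∘ Mₙ(γ)`: there are a ring automorphism `γ` of `D` and an invertible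
matrix `C` (with two-sided inverse `C'`) such that `σ A = C * (A.map γ) * C⁻¹`
for all `A`, where `Mₙ(γ)` is the entrywise application of `γ`. -/
theorem matrix_ringAut_decomposition {D : Type*} [DivisionRing D] (n : ℕ)
    (σ : Matrix (Fin n) (Fin n) D ≃+* Matrix (Fin n) (Fin n) D) :
    ∃ (γ : D ≃+* D) (C C' : Matrix (Fin n) (Fin n) D),
      C * C' = 1 ∧ C' * C = 1 ∧
      ∀ A : Matrix (Fin n) (Fin n) D, σ A = C * A.map ⇑γ * C' := by
  classical
  rcases Nat.eq_zero_or_pos n with hn | hn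
  · subst hn
    exact ⟨RingEquiv.refl D, 1, 1, by simp, by simp,
      fun A => Subsingleton.elim _ _⟩
  haveI : NeZero n := ⟨hn.ne'⟩
  obtain ⟨f, hf⟩ : ∃ f : Fin n → Matrix (Fin n) (Fin n) D,
      ∀ i, f i = σ (Matrix.single i i (1 : D)) := ⟨_, fun _ => rfl⟩
  -- multiplication rules for the idempotents `f i`
  have hff : ∀ i j : Fin n, f i * f j = if i = j then f i else 0 := by
    intro i j
    simp only [hf]
    rw [← _root_.map_mul]
    by_cases hij : i = j
    · subst hij
      simp
    · rw [Matrix.single_mul_single_of_ne (h := hij), _root_.map_zero, if_neg hij]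
  have hsum : (∑ i, f i) = 1 := by
    simp only [hf]
    rw [← _root_.map_sum, sum_diag_one, _root_.map_one]
  -- a vector `v ≠ 0` in the range of `f 0`
  have hf0 : f 0 ≠ 0 := by
    simp only [hf, ne_eq, EmbeddingLike.map_eq_zero_iff]
    intro h
    have := congrFun (congrFun h 0) 0
    simp at this
  obtain ⟨u, hu⟩ : ∃ u, f 0 *ᵥ u ≠ 0 := by
    by_contra h
    push_neg at h
    apply hf0
    ext i j
    have := congrFun (h (Pi.single j 1)) i
    simpa using this
  obtain ⟨v, hv, hfv⟩ : ∃ v : Fin n → D, v ≠ 0 ∧ f 0 *ᵥ v = v := by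
    refine ⟨f 0 *ᵥ u, hu, ?_⟩
    rw [Matrix.mulVec_mulVec, show f 0 * f 0 = f 0 by rw [hff]; simp]
  obtain ⟨k0, hk0⟩ : ∃ k, v k ≠ 0 := Function.ne_iff.mp hv
  -- uniqueness of right scalars
  have huniq : ∀ c c' : D, (fun i => v i * c) = (fun i => v i * c') → c = c' := by
    intro c c' h
    have := congrFun h k0
    exact mul_left_cancel₀ hk0 this
  -- the ranges of the `f i` as `Dᵐᵒᵖ`-submodules
  set W : Fin n → Submodule Dᵐᵒᵖ (Fin n → D) := fun i => LinearMap.range (Lop (f i)) with hW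
  have hmemW : ∀ (i : Fin n) (w : Fin n → D), w ∈ W i ↔ f i *ᵥ w = w := by
    intro i w
    constructor
    · rintro ⟨x, rfl⟩
      simp only [Lop_apply, Matrix.mulVec_mulVec]
      rw [show f i * f i = f i by rw [hff]; simp]
    · intro h
      exact ⟨w, h⟩
  -- `V = Fin n → D` is an `n`-dimensional `Dᵐᵒᵖ`-space
  let peq : (Fin n → D) ≃ₗ[Dᵐᵒᵖ] (Fin n → Dᵐᵒᵖ) :=
    LinearEquiv.piCongrRight fun _ => MulOpposite.opLinearEquiv Dᵐᵒᵖ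
  haveI hfinV : Module.Finite Dᵐᵒᵖ (Fin n → D) := Module.Finite.equiv peq.symm
  have hrankV : Module.finrank Dᵐᵒᵖ (Fin n → D) = n := by
    rw [peq.finrank_eq, Module.finrank_pi, Fintype.card_fin]
  -- `V` decomposes as the direct product of the `W i`
  let dec : (Fin n → D) ≃ₗ[Dᵐᵒᵖ] (∀ i, W i) :=
    { toFun := fun x i => ⟨f i *ᵥ x, ⟨x, rfl⟩⟩
      map_add' := by
        intro x y
        funext i
        apply Subtype.ext
        simp [Matrix.mulVec_add]
      map_smul' := by
        intro c x
        funext i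
        apply Subtype.ext
        exact (Lop (f i)).map_smul c x
      invFun := fun g => ∑ i, (g i : Fin n → D)
      left_inv := by
        intro x
        show (∑ i, f i *ᵥ x) = x
        rw [← MatrixRingAutAux.sum_mulVec, hsum, Matrix.one_mulVec]
      right_inv := by
        intro g
        funext i
        apply Subtype.ext
        have hj : ∀ j, f i *ᵥ (g j : Fin n → D) = if i = j then (g j : Fin n → D) else 0 := by
          intro j
          by_cases hij : i = j
          · subst hij
            rw [if_pos rfl, (hmemW i (g i)).mp (g i).2]
          · rw [if_neg hij, ← (hmemW j (g j)).mp (g j).2, Matrix.mulVec_mulVec, hff,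
              if_neg hij, Matrix.zero_mulVec]
        calc f i *ᵥ ∑ j, (g j : Fin n → D)
            = ∑ j, f i *ᵥ (g j : Fin n → D) := MatrixRingAutAux.mulVec_sum _ _ _
          _ = (g i : Fin n → D) := by
              simp only [hj]
              simp }
  have hranksum : n = ∑ i, Module.finrank Dᵐᵒᵖ (W i) :=
    hrankV.symm.trans (dec.finrank_eq.trans (Module.finrank_pi_fintype _))
  -- all the `W i` have the same dimension
  have hiso : ∀ i : Fin n, Module.finrank Dᵐᵒᵖ (W i) = Module.finrank Dᵐᵒᵖ (W 0) := by
    intro i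
    refine (LinearEquiv.finrank_eq ?_).symm
    have mem1 : ∀ w : Fin n → D, w ∈ W 0 → σ (Matrix.single i 0 1) *ᵥ w ∈ W i := by
      intro w _
      rw [hmemW i]
      rw [Matrix.mulVec_mulVec, hf, ← _root_.map_mul, Matrix.single_mul_single_same, one_mul]
    have mem2 : ∀ w : Fin n → D, w ∈ W i → σ (Matrix.single 0 i 1) *ᵥ w ∈ W 0 := by
      intro w _
      rw [hmemW 0]
      rw [Matrix.mulVec_mulVec, hf, ← _root_.map_mul, Matrix.single_mul_single_same, one_mul]
    refine
      { toFun := fun w => ⟨σ (Matrix.single i 0 1) *ᵥ (w : Fin n → D), mem1 w w.2⟩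
        map_add' := by
          intro x y
          apply Subtype.ext
          simp [Matrix.mulVec_add]
        map_smul' := by
          intro c x
          apply Subtype.ext
          exact (Lop (σ (Matrix.single i 0 1))).map_smul c (x : Fin n → D)
        invFun := fun w => ⟨σ (Matrix.single 0 i 1) *ᵥ (w : Fin n → D), mem2 w w.2⟩
        left_inv := by
          intro w
          apply Subtype.ext
          have hw := (hmemW 0 w).mp w.2
          rw [hf 0] at hw
          simp only [Matrix.mulVec_mulVec, ← _root_.map_mul, Matrix.single_mul_single_same, one_mul]
          exact hw
        right_inv := by
          intro w
          apply Subtype.ext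
          have hw := (hmemW i w).mp w.2
          rw [hf i] at hw
          simp only [Matrix.mulVec_mulVec, ← _root_.map_mul, Matrix.single_mul_single_same, one_mul]
          exact hw }
  have hrank1 : Module.finrank Dᵐᵒᵖ (W 0) = 1 := by
    have h2 : ∑ i, Module.finrank Dᵐᵒᵖ (W i) = n * Module.finrank Dᵐᵒᵖ (W 0) := by
      simp only [hiso]
      rw [Finset.sum_const, Finset.card_univ, Fintype.card_fin, smul_eq_mul]
    have h3 : n = n * Module.finrank Dᵐᵒᵖ (W 0) := hranksum.trans h2
    exact (Nat.eq_of_mul_eq_mul_left hn (by omega)).symm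
  -- every vector fixed by `f 0` is a right multiple of `v`
  have hscalar : ∀ w : Fin n → D, f 0 *ᵥ w = w → ∃ c : D, w = fun i => v i * c := by
    intro w hw
    set v0 : W 0 := ⟨v, (hmemW 0 v).mpr hfv⟩ with hv0
    have hv0ne : v0 ≠ 0 := by
      intro h
      exact hv (congrArg Subtype.val h)
    obtain ⟨c, hc⟩ := (finrank_eq_one_iff_of_nonzero' v0 hv0ne).mp hrank1
      ⟨w, (hmemW 0 w).mpr hw⟩
    refine ⟨c.unop, ?_⟩
    have := congrArg Subtype.val hc
    simp only [Submodule.coe_smul] at this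
    rw [← this]
    rfl
  -- the induced map `g : D → D`
  have hmu : ∀ d : D, f 0 *ᵥ (σ (Matrix.single 0 0 d) *ᵥ v) = σ (Matrix.single 0 0 d) *ᵥ v := by
    intro d
    rw [Matrix.mulVec_mulVec, hf, ← _root_.map_mul, Matrix.single_mul_single_same, one_mul]
  choose g hg using fun d => hscalar _ (hmu d)
  -- `g` is a ring homomorphism
  have hg1 : g 1 = 1 := by
    apply huniq
    rw [← hg 1]
    funext i
    rw [mul_one]
    have h' := hfv
    rw [hf 0] at h'
    exact congrFun h' i
  have hgadd : ∀ a b : D, g (a + b) = g a + g b := by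
    intro a b
    apply huniq
    rw [← hg (a + b)]
    funext i
    rw [Matrix.single_add, map_add, Matrix.add_mulVec, mul_add]
    have ha := congrFun (hg a) i
    have hb := congrFun (hg b) i
    exact congrArg₂ (· + ·) ha hb
  have hgmul : ∀ a b : D, g (a * b) = g a * g b := by
    intro a b
    apply huniq
    rw [← hg (a * b)]
    have : Matrix.single (0 : Fin n) (0 : Fin n) (a * b) =
        Matrix.single (0 : Fin n) (0 : Fin n) a * Matrix.single (0 : Fin n) (0 : Fin n) b :=
      (Matrix.single_mul_single_same _ _ _ _ _).symm
    rw [this, _root_.map_mul, ← Matrix.mulVec_mulVec, hg b, mulVec_mulRight, hg a]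
    funext i
    rw [mul_assoc]
  have hgzero : g 0 = 0 := by
    apply huniq
    rw [← hg 0]
    funext i
    rw [Matrix.single_zero, _root_.map_zero, Matrix.zero_mulVec, mul_zero]
    rfl
  let ghom : D →+* D :=
    { toFun := g, map_one' := hg1, map_mul' := hgmul, map_zero' := hgzero, map_add' := hgadd }
  have hginj : Function.Injective g := ghom.injective
  -- `g` is surjective
  have hgsurj : Function.Surjective g := by
    intro c
    -- a matrix sending `v` to `fun i => v i * c`
    obtain ⟨B, hB⟩ : ∃ B : Matrix (Fin n) (Fin n) D,
        ∀ i j, B i j = if j = k0 then v i * c * (v k0)⁻¹ else 0 :=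
      ⟨Matrix.of fun i j => _, fun _ _ => rfl⟩
    have hBv : B *ᵥ v = fun i => v i * c := by
      funext i
      show (∑ j, B i j * v j) = v i * c
      simp only [hB]
      rw [Finset.sum_eq_single k0]
      · rw [if_pos rfl, mul_assoc, inv_mul_cancel₀ hk0, mul_one]
      · intro j _ hj
        rw [if_neg hj, zero_mul]
      · simp
    refine ⟨(σ.symm B) 0 0, ?_⟩
    apply huniq _ c
    rw [← hg ((σ.symm B) 0 0)]
    have hcorn : Matrix.single (0 : Fin n) 0 ((σ.symm B) 0 0)
        = Matrix.single 0 0 1 * σ.symm B * Matrix.single 0 0 1 := (corner hn _).symm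
    rw [hcorn, _root_.map_mul, _root_.map_mul, RingEquiv.apply_symm_apply]
    have : σ (Matrix.single (0 : Fin n) 0 (1 : D)) = f 0 := (hf 0).symm
    rw [this, ← Matrix.mulVec_mulVec, ← Matrix.mulVec_mulVec, hfv, hBv, mulVec_mulRight, hfv]
  -- the matrix `C`
  obtain ⟨C, hC⟩ : ∃ C : Matrix (Fin n) (Fin n) D,
      ∀ i k, C i k = (σ (Matrix.single k 0 1) *ᵥ v) i :=
    ⟨Matrix.of fun i k => _, fun _ _ => rfl⟩
  -- the fundamental identity
  have hBv' : ∀ B : Matrix (Fin n) (Fin n) D,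
      σ B *ᵥ v = C *ᵥ fun j => g (B j 0) := by
    intro B
    have hdec : B * Matrix.single (0 : Fin n) 0 (1 : D)
        = ∑ j, Matrix.single j (0 : Fin n) (1 : D)
            * Matrix.single (0 : Fin n) (0 : Fin n) (B j 0) := by
      funext a b
      simp only [Matrix.single_mul_single_same, one_mul, Matrix.sum_apply]
      by_cases hb : b = 0
      · subst hb
        rw [Matrix.mul_single_apply_same, mul_one, Finset.sum_eq_single a]
        · rw [Matrix.single_apply_same]
        · intro j _ hj
          exact Matrix.single_apply_of_ne _ _ _ _ _ (by tauto)
        · simp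
      · rw [Matrix.mul_single_apply_of_ne _ _ _ _ _ hb]
        rw [Finset.sum_eq_zero]
        intro j _
        exact Matrix.single_apply_of_ne _ _ _ _ _ (by tauto)
    calc σ B *ᵥ v = σ B *ᵥ (f 0 *ᵥ v) := by rw [hfv]
      _ = (σ B * f 0) *ᵥ v := Matrix.mulVec_mulVec _ _ _
      _ = σ (B * Matrix.single 0 0 1) *ᵥ v := by rw [hf, ← _root_.map_mul]
      _ = (∑ j, σ (Matrix.single j (0 : Fin n) (1 : D))
            * σ (Matrix.single (0 : Fin n) (0 : Fin n) (B j 0))) *ᵥ v := by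
          rw [hdec, _root_.map_sum]
          exact congrArg (fun M => M *ᵥ v)
            (Finset.sum_congr rfl fun j _ => _root_.map_mul σ _ _)
      _ = ∑ j, (σ (Matrix.single j (0 : Fin n) (1 : D))
            * σ (Matrix.single (0 : Fin n) (0 : Fin n) (B j 0))) *ᵥ v :=
          MatrixRingAutAux.sum_mulVec _ _ _
      _ = ∑ j, (fun i => C i j * g (B j 0)) := by
          refine Finset.sum_congr rfl fun j _ => ?_
          rw [← Matrix.mulVec_mulVec, hg (B j 0), mulVec_mulRight]
          funext i
          rw [hC i j]
      _ = C *ᵥ fun j => g (B j 0) := by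
          funext i
          simp [Matrix.mulVec, dotProduct, Finset.sum_apply]
  -- `C` is surjective
  have hCsurj : ∀ w : Fin n → D, ∃ x, C *ᵥ x = w := by
    intro w
    obtain ⟨M, hM⟩ : ∃ M : Matrix (Fin n) (Fin n) D,
        ∀ i j, M i j = if j = k0 then w i * (v k0)⁻¹ else 0 :=
      ⟨Matrix.of fun i j => _, fun _ _ => rfl⟩
    have hMv : M *ᵥ v = w := by
      funext i
      show (∑ j, M i j * v j) = w i
      simp only [hM]
      rw [Finset.sum_eq_single k0]
      · rw [if_pos rfl, mul_assoc, inv_mul_cancel₀ hk0, mul_one]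
      · intro j _ hj
        rw [if_neg hj, zero_mul]
      · simp
    refine ⟨fun j => g ((σ.symm M) j 0), ?_⟩
    rw [← hBv' (σ.symm M), RingEquiv.apply_symm_apply, hMv]
  -- `C` is injective
  have hCinj : ∀ x : Fin n → D, C *ᵥ x = 0 → x = 0 := by
    intro x hx
    choose d hd using fun j => hgsurj (x j)
    obtain ⟨B, hB⟩ : ∃ B : Matrix (Fin n) (Fin n) D,
        ∀ j l, B j l = if l = 0 then d j else 0 := ⟨Matrix.of fun j l => _, fun _ _ => rfl⟩
    have hB0 : ∀ j, B j 0 = d j := fun j => by rw [hB, if_pos rfl]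
    have hBv0 : σ B *ᵥ v = 0 := by
      rw [hBv' B]
      have : (fun j => g (B j 0)) = x := by
        funext j
        rw [hB0 j, hd j]
      rw [this, hx]
    have hd0 : ∀ j, d j = 0 := by
      intro j
      by_contra hdj
      have h1 : Matrix.single (0 : Fin n) (0 : Fin n) ((d j)⁻¹)
          * (Matrix.single (0 : Fin n) j (1 : D) * B)
          = Matrix.single (0 : Fin n) (0 : Fin n) (1 : D) := by
        have h2 : Matrix.single (0 : Fin n) j (1 : D) * B
            = Matrix.single (0 : Fin n) (0 : Fin n) (d j) := by
          funext a b
          by_cases ha : a = 0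
          · subst ha
            rw [Matrix.single_mul_apply_same, hB, one_mul]
            by_cases hb : b = 0
            · subst hb
              rw [if_pos rfl, Matrix.single_apply_same]
            · rw [if_neg hb]
              exact (Matrix.single_apply_of_ne _ _ _ _ _ (by tauto)).symm
          · rw [Matrix.single_mul_apply_of_ne _ _ _ _ _ ha]
            exact (Matrix.single_apply_of_ne _ _ _ _ _ (by tauto)).symm
        rw [h2, Matrix.single_mul_single_same, inv_mul_cancel₀ hdj]
      have h3 : v = 0 := by
        have h4 := hfv
        rw [hf 0, ← h1, _root_.map_mul, _root_.map_mul, ← Matrix.mulVec_mulVec,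
          ← Matrix.mulVec_mulVec, hBv0, Matrix.mulVec_zero, Matrix.mulVec_zero] at h4
        exact h4.symm
      exact hv h3
    funext j
    rw [← hd j, hd0 j]
    exact hgzero
  -- construct the right inverse `C'`
  choose xx hxx using fun k => hCsurj (Pi.single k (1 : D))
  obtain ⟨C', hC'⟩ : ∃ C' : Matrix (Fin n) (Fin n) D, ∀ j k, C' j k = xx k j :=
    ⟨Matrix.of fun j k => _, fun _ _ => rfl⟩
  have hCC' : C * C' = 1 := by
    funext i k
    show (∑ j, C i j * C' j k) = (1 : Matrix (Fin n) (Fin n) D) i k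
    simp only [hC']
    have := congrFun (hxx k) i
    simp only [Matrix.mulVec, dotProduct] at this
    rw [this, Pi.single_apply, Matrix.one_apply]
  have hC'C : C' * C = 1 := by
    have key : ∀ x : Fin n → D, (C' * C) *ᵥ x = x := by
      intro x
      have h5 : C *ᵥ ((C' * C) *ᵥ x - x) = 0 := by
        rw [Matrix.mulVec_sub, Matrix.mulVec_mulVec, ← Matrix.mul_assoc, hCC', Matrix.one_mul,
          sub_self]
      have := hCinj _ h5
      exact sub_eq_zero.mp this
    funext i j
    have := congrFun (key (Pi.single j 1)) i
    rw [Matrix.mulVec_single] at this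
    simp only [MulOpposite.op_one, one_smul, Matrix.col_apply] at this
    rw [this, Pi.single_apply, Matrix.one_apply]
  -- assemble the automorphism and conclude
  let γ : D ≃+* D := RingEquiv.ofBijective ghom ⟨hginj, hgsurj⟩
  refine ⟨γ, C, C', hCC', hC'C, ?_⟩
  intro A
  have hkey : σ A * C = C * A.map g := by
    funext i k
    have hcol : (fun j => C j k) = σ (Matrix.single k (0 : Fin n) (1 : D)) *ᵥ v :=
      funext fun j => hC j k
    have lhs : (σ A * C) i k = (σ (A * Matrix.single k 0 1) *ᵥ v) i := by
      rw [_root_.map_mul, ← Matrix.mulVec_mulVec, ← hcol]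
      rfl
    have rhs : (C * A.map g) i k = (C *ᵥ fun j => g (A j k)) i := rfl
    rw [lhs, rhs, hBv' (A * Matrix.single k 0 1)]
    congr 2
    funext j
    rw [Matrix.mul_single_apply_same, mul_one]
  have hstep : σ A = σ A * (C * C') := by rw [hCC', Matrix.mul_one]
  have hγ : ⇑γ = g := rfl
  rw [hstep, ← Matrix.mul_assoc, hkey, Matrix.mul_assoc, hγ, ← Matrix.mul_assoc]
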